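/- Let Ω be a nonempty open subset of ℝ^{n+1} (n ≥ 1) with nonempty topological boundary ∂Ω, let u(y) = dist(y, ∂Ω), let 0 < s < t, and let y ∈ Γ_s^t with configuration (x, z). Then u is differentiable at y, and its gradient is the unit vector N(y) = ∇u(y) = (z − x)/t = −(x − z)/‖x − z‖. -/

import Mathlib

open RealInnerProductSpace Metric Set

open Asymptotics in
lemma myHasFDerivAt_norm {E : Type*} [NormedAddCommGroup E] [InnerProductSpace ℝ E]
    {x : E} (hx : x ≠ 0) :
    HasFDerivAt (fun w : E => ‖w‖) (‖x‖⁻¹ • innerSL ℝ x) x := by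
  have h1 : HasFDerivAt (fun w : E => ‖w‖ ^ 2) ((2 : ℝ) • innerSL ℝ x) x := by
    have h := (hasStrictFDerivAt_norm_sq x).hasFDerivAt
    have : ((2 : ℕ) • innerSL ℝ x : E →L[ℝ] ℝ) = (2 : ℝ) • innerSL ℝ x := by
      ext w; simp
    rwa [this] at h
  have hx2 : (0:ℝ) < ‖x‖ := norm_pos_iff.mpr hx
  have h2 : HasDerivAt Real.sqrt (1 / (2 * Real.sqrt (‖x‖ ^ 2))) (‖x‖ ^ 2) :=
    Real.hasDerivAt_sqrt (by positivity)
  have h3 := h2.comp_hasFDerivAt x h1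
  have heq : (Real.sqrt ∘ fun w : E => ‖w‖ ^ 2) = fun w : E => ‖w‖ := by
    funext w; simp [Real.sqrt_sq (norm_nonneg w)]
  rw [heq] at h3
  have e : (1 / (2 * Real.sqrt (‖x‖ ^ 2))) • (2:ℝ) • innerSL ℝ x = ‖x‖⁻¹ • innerSL ℝ x := by
    rw [Real.sqrt_sq (norm_nonneg x), smul_smul]
    congr 1
    field_simp
  rw [e] at h3
  exact h3

open Asymptotics in
lemma mySandwich {E : Type*} [NormedAddCommGroup E] [NormedSpace ℝ E]
    {f u g : E → ℝ} {L : E →L[ℝ] ℝ} {y : E}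
    (hf : HasFDerivAt f L y) (hg : HasFDerivAt g L y)
    (hfu : ∀ w, f w ≤ u w) (hug : ∀ w, u w ≤ g w)
    (hfy : f y = u y) (hgy : g y = u y) :
    HasFDerivAt u L y := by
  rw [hasFDerivAt_iff_isLittleO_nhds_zero] at hf hg ⊢
  have key : ∀ h, ‖u (y + h) - u y - L h‖ ≤
      ‖(‖f (y + h) - f y - L h‖ + ‖g (y + h) - g y - L h‖)‖ := by
    intro h
    have h1 := hfu (y + h)
    have h2 := hug (y + h)
    have ha := neg_abs_le (f (y + h) - f y - L h)
    have hb := le_abs_self (g (y + h) - g y - L h)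
    have hna : (0:ℝ) ≤ |f (y + h) - f y - L h| := abs_nonneg _
    have hnb : (0:ℝ) ≤ |g (y + h) - g y - L h| := abs_nonneg _
    simp only [Real.norm_eq_abs]
    have hrhs : |(|f (y + h) - f y - L h| + |g (y + h) - g y - L h|)| =
        |f (y + h) - f y - L h| + |g (y + h) - g y - L h| := abs_of_nonneg (by positivity)
    rw [hrhs, abs_le]
    constructor <;> linarith
  have hO : (fun h => u (y + h) - u y - L h) =O[nhds 0]
      (fun h => ‖f (y + h) - f y - L h‖ + ‖g (y + h) - g y - L h‖) :=
    Asymptotics.isBigO_of_le _ key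
  exact hO.trans_isLittleO (hf.norm_left.add hg.norm_left)

/-- At a point `y ∈ Γ_s^t` with configuration `(x, z)`, the distance function
`u = dist(·, ∂Ω)` is differentiable with gradient the unit vector
`N(y) = (z - x)/t = -(x - z)/‖x - z‖`. -/
theorem stmt_9 (n : ℕ) (hn : 1 ≤ n)
    (Ω : Set (EuclideanSpace ℝ (Fin (n + 1))))
    (hΩopen : IsOpen Ω) (hΩne : Ω.Nonempty) (hfr : (frontier Ω).Nonempty)
    (u : EuclideanSpace ℝ (Fin (n + 1)) → ℝ)
    (hu : ∀ y, u y = Metric.infDist y (frontier Ω))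
    (s t : ℝ) (hs : 0 < s) (hst : s < t)
    (y x z : EuclideanSpace ℝ (Fin (n + 1)))
    (hx : x ∈ frontier Ω) (hz : z ∈ Ω) (huz : u z = t) (hxz : ‖x - z‖ = t)
    (hy : y = x + (s / t) • (z - x)) :
    HasGradientAt u (t⁻¹ • (z - x)) y := by
  have ht : 0 < t := hs.trans hst
  have ht0 : t ≠ 0 := ht.ne'
  have hzx : ‖z - x‖ = t := by rw [norm_sub_rev]; exact hxz
  have hyx : y - x = (s / t) • (z - x) := by rw [hy, add_sub_cancel_left]
  have hyxn : ‖y - x‖ = s := by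
    rw [hyx, norm_smul, hzx, Real.norm_eq_abs, abs_of_pos (div_pos hs ht)]
    field_simp
  have hyz : y - z = ((s - t) / t) • (z - x) := by
    have h1 : y - z = (s / t) • (z - x) - (z - x) := by rw [hy]; abel
    rw [h1, show (s - t) / t = s / t - 1 by field_simp, sub_smul, one_smul]
  have hyzn : ‖y - z‖ = t - s := by
    rw [hyz, norm_smul, hzx, Real.norm_eq_abs,
      abs_of_nonpos (div_nonpos_of_nonpos_of_nonneg (by linarith) ht.le)]
    field_simp
    ring
  have hy0x : y - x ≠ 0 := by
    intro h; rw [h, norm_zero] at hyxn; exact hs.ne hyxn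
  have hy0z : y - z ≠ 0 := by
    intro h; rw [h, norm_zero] at hyzn; linarith
  -- value of u at y
  have huy : u y = s := by
    have hle : u y ≤ s := by
      rw [hu]
      calc Metric.infDist y (frontier Ω) ≤ dist y x := Metric.infDist_le_dist_of_mem hx
        _ = s := by rw [dist_eq_norm, hyxn]
    have hge : Metric.infDist z (frontier Ω) ≤ Metric.infDist y (frontier Ω) + dist z y :=
      Metric.infDist_le_infDist_add_dist
    rw [← hu, ← hu, huz, dist_eq_norm, norm_sub_rev, hyzn] at hge
    linarith
  -- bounds
  have hug : ∀ w, u w ≤ ‖w - x‖ := by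
    intro w
    rw [hu, ← dist_eq_norm]
    exact Metric.infDist_le_dist_of_mem hx
  have hfu : ∀ w, t - ‖w - z‖ ≤ u w := by
    intro w
    have h := Metric.infDist_le_infDist_add_dist (x := z) (y := w) (s := frontier Ω)
    rw [← hu, ← hu, huz, dist_eq_norm, norm_sub_rev] at h
    linarith
  rw [hasGradientAt_iff_hasFDerivAt]
  set L : EuclideanSpace ℝ (Fin (n + 1)) →L[ℝ] ℝ :=
    InnerProductSpace.toDual ℝ (EuclideanSpace ℝ (Fin (n + 1))) (t⁻¹ • (z - x)) with hL
  -- derivatives of the bounds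
  have hgd : HasFDerivAt (fun w : EuclideanSpace ℝ (Fin (n + 1)) => ‖w - x‖) L y := by
    have h := (myHasFDerivAt_norm hy0x).comp y ((hasFDerivAt_id y).sub_const x)
    have heq : ((‖y - x‖⁻¹ • innerSL ℝ (y - x)).comp
        (ContinuousLinearMap.id ℝ (EuclideanSpace ℝ (Fin (n + 1))))) = L := by
      ext w
      rw [hL]
      simp only [ContinuousLinearMap.coe_comp', Function.comp_apply,
        ContinuousLinearMap.coe_id', id_eq, ContinuousLinearMap.coe_smul', Pi.smul_apply,
        innerSL_apply_apply, InnerProductSpace.toDual_apply_apply, smul_eq_mul]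
      rw [hyxn, hyx]
      simp only [real_inner_smul_left]
      generalize (inner ℝ (z - x) w : ℝ) = A
      field_simp
    rw [heq] at h
    exact h
  have hfd : HasFDerivAt (fun w : EuclideanSpace ℝ (Fin (n + 1)) => t - ‖w - z‖) L y := by
    have h1 := (myHasFDerivAt_norm hy0z).comp y ((hasFDerivAt_id y).sub_const z)
    have h := (hasFDerivAt_const t y).sub h1
    have heq : ((0 : EuclideanSpace ℝ (Fin (n + 1)) →L[ℝ] ℝ) -
        (‖y - z‖⁻¹ • innerSL ℝ (y - z)).comp
          (ContinuousLinearMap.id ℝ (EuclideanSpace ℝ (Fin (n + 1))))) = L := by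
      ext w
      rw [hL]
      simp only [ContinuousLinearMap.sub_apply, ContinuousLinearMap.zero_apply,
        ContinuousLinearMap.coe_comp', Function.comp_apply,
        ContinuousLinearMap.coe_id', id_eq, ContinuousLinearMap.coe_smul', Pi.smul_apply,
        innerSL_apply_apply, InnerProductSpace.toDual_apply_apply, smul_eq_mul]
      rw [hyzn, hyz]
      simp only [real_inner_smul_left]
      have hts : t - s ≠ 0 := sub_ne_zero.mpr hst.ne'
      generalize (inner ℝ (z - x) w : ℝ) = A
      field_simp
      ring
    rw [heq] at h
    exact h
  exact mySandwich hfd hgd hfu hug (by rw [hyzn, huy]; ring) (by rw [hyxn, huy])
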